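/- arXiv:2603.28468 — 2 statements merged into one kernel-verified Lean document; each statement's English description precedes it below -/
import Mathlib

section
/- Fix d ∈ {1,2,3,7,11} and x ∈ ℚ(√(-d)). Elements R₁,…,R_n of ℚ(√(-d)) ∪ {∞} with R_n = x are the consecutive convergents of some continued fraction expansion of x with partial quotients in ℤ[ω_d] — i.e., there exist a₁,…,a_n ∈ ℤ[ω_d] such that R_k = (S_{a₁}⋯S_{a_k})(∞) for all k ∈ {1,…,n} — if and only if ∞ → R₁ → ⋯ → R_n is a walk in the Farey graph E_d. -/
/-- `ω_d`: the generator of the ring of integers of `ℚ(√(-d))`. -/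
noncomputable def omegaD (d : ℕ) : ℂ :=
  if d % 4 = 3 then (1 + Complex.I * Real.sqrt d) / 2 else Complex.I * Real.sqrt d

/-- The ring of integers `ℤ[ω_d]` of `ℚ(√(-d))`, as a subset of `ℂ`. -/
def ringInt (d : ℕ) : Set ℂ := {z | ∃ a b : ℤ, z = (a : ℂ) + (b : ℂ) * omegaD d}

/-- `p` and `q` are coprime in `ℤ[ω_d]`. -/
def CoprimeIn (d : ℕ) (p q : ℂ) : Prop :=
  ∃ u v : ℂ, u ∈ ringInt d ∧ v ∈ ringInt d ∧ u * p + v * q = 1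

/-- `x` is an element of the field `ℚ(√(-d)) ⊆ ℂ`. -/
def inK (d : ℕ) (x : ℂ) : Prop :=
  ∃ p q : ℂ, p ∈ ringInt d ∧ q ∈ ringInt d ∧ q ≠ 0 ∧ x = p / q

/-- The point `p/q` of `ℂ ∪ {∞}`, with `p/0 = ∞`. -/
noncomputable def divC (p q : ℂ) : OnePoint ℂ :=
  if q = 0 then OnePoint.infty else ((p / q : ℂ) : OnePoint ℂ)

/-- Two points of `ℚ(√(-d)) ∪ {∞}` are Farey neighbours (joined by an edge of
the Farey graph `E_d`) if they have coprime representations `p₁/q₁`, `p₂/q₂`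
with `|p₁q₂ − p₂q₁| = 1`. -/
def FareyAdj (d : ℕ) (x y : OnePoint ℂ) : Prop :=
  ∃ p₁ q₁ p₂ q₂ : ℂ, p₁ ∈ ringInt d ∧ q₁ ∈ ringInt d ∧ p₂ ∈ ringInt d ∧ q₂ ∈ ringInt d ∧
    CoprimeIn d p₁ q₁ ∧ CoprimeIn d p₂ q₂ ∧ x = divC p₁ q₁ ∧ y = divC p₂ q₂ ∧
    ‖p₁ * q₂ - p₂ * q₁‖ = 1

/-- `f 0 → f 1 → ⋯ → f n` is a walk (of length `n`) in the Farey graph `E_d`. -/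
def IsWalk (d n : ℕ) (f : ℕ → OnePoint ℂ) : Prop := ∀ k, k < n → FareyAdj d (f k) (f (k + 1))

/-- `f 0 → ⋯ → f n` is a geodesic path in `E_d`: a walk of minimal length
among all walks with the same endpoints. -/
def IsGeodesicWalk (d n : ℕ) (f : ℕ → OnePoint ℂ) : Prop :=
  IsWalk d n f ∧ ∀ (m : ℕ) (g : ℕ → OnePoint ℂ), IsWalk d m g → g 0 = f 0 → g m = f n → n ≤ m

/-- Numerators of the convergents of `[a₁, a₂, …]` (`a 0` is unused):
`p₀ = 0`, `p₁ = 1`, `p_k = a_k p_{k−1} + p_{k−2}`. -/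
noncomputable def cfP (a : ℕ → ℂ) : ℕ → ℂ
  | 0 => 0
  | 1 => 1
  | (k + 2) => a (k + 2) * cfP a (k + 1) + cfP a k

/-- Denominators of the convergents of `[a₁, a₂, …]`:
`q₀ = 1`, `q₁ = a₁`, `q_k = a_k q_{k−1} + q_{k−2}`. -/
noncomputable def cfQ (a : ℕ → ℂ) : ℕ → ℂ
  | 0 => 1
  | 1 => a 1
  | (k + 2) => a (k + 2) * cfQ a (k + 1) + cfQ a k

/-- The walk `∞ → p₀/q₀ = 0 → p₁/q₁ → ⋯` along the convergents of `[a₁, a₂, …]`. -/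
noncomputable def cfWalk (a : ℕ → ℂ) : ℕ → OnePoint ℂ :=
  fun k => if k = 0 then OnePoint.infty else divC (cfP a (k - 1)) (cfQ a (k - 1))

/-- The matrix of the Möbius transformation `S_a : z ↦ a + 1/z`. -/
noncomputable def Smat (a : ℂ) : Matrix (Fin 2) (Fin 2) ℂ := !![a, 1; 1, 0]

/-- The product `S_{a₁} ⋯ S_{a_k}` of the matrices of the partial quotients. -/
noncomputable def Sprod (a : ℕ → ℂ) : ℕ → Matrix (Fin 2) (Fin 2) ℂ
  | 0 => 1
  | (k + 1) => Sprod a k * Smat (a (k + 1))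

lemma ri_int (d : ℕ) (n : ℤ) : (n : ℂ) ∈ ringInt d := ⟨n, 0, by simp⟩
lemma ri_one (d : ℕ) : (1 : ℂ) ∈ ringInt d := by simpa using ri_int d 1
lemma ri_zero (d : ℕ) : (0 : ℂ) ∈ ringInt d := by simpa using ri_int d 0
lemma ri_negonepow (d : ℕ) (k : ℕ) : ((-1 : ℂ)) ^ k ∈ ringInt d := by
  have h : ((-1 : ℂ)) ^ k = (((-1 : ℤ)) ^ k : ℤ) := by push_cast; ring
  rw [h]; exact ri_int d _
lemma ri_add (d : ℕ) {x y : ℂ} (hx : x ∈ ringInt d) (hy : y ∈ ringInt d) :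
    x + y ∈ ringInt d := by
  obtain ⟨a, b, rfl⟩ := hx; obtain ⟨c, e, rfl⟩ := hy
  exact ⟨a + c, b + e, by push_cast; ring⟩
lemma ri_neg (d : ℕ) {x : ℂ} (hx : x ∈ ringInt d) : -x ∈ ringInt d := by
  obtain ⟨a, b, rfl⟩ := hx
  exact ⟨-a, -b, by push_cast; ring⟩
lemma sqrt_sq' (d : ℕ) : ((Real.sqrt ((d:ℕ):ℝ) : ℝ) : ℂ)^2 = ((d:ℕ):ℂ) := by
  rw [← Complex.ofReal_pow, Real.sq_sqrt (by positivity)]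
  norm_num
lemma omega_sq (d : ℕ) (hd : d ∈ ({1, 2, 3, 7, 11} : Set ℕ)) :
    ∃ A B : ℤ, omegaD d * omegaD d = (A : ℂ) + (B : ℂ) * omegaD d := by
  simp only [Set.mem_insert_iff, Set.mem_singleton_iff] at hd
  rcases hd with rfl | rfl | rfl | rfl | rfl
  · refine ⟨-1, 0, ?_⟩
    rw [omegaD, if_neg (by decide)]
    have h2 := sqrt_sq' 1
    push_cast at h2 ⊢
    linear_combination ((Real.sqrt 1 : ℂ)^2) * Complex.I_sq - h2
  · refine ⟨-2, 0, ?_⟩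
    rw [omegaD, if_neg (by decide)]
    have h2 := sqrt_sq' 2
    push_cast at h2 ⊢
    linear_combination ((Real.sqrt 2 : ℂ)^2) * Complex.I_sq - h2
  · refine ⟨-1, 1, ?_⟩
    rw [omegaD, if_pos (by decide)]
    have h2 := sqrt_sq' 3
    push_cast at h2 ⊢
    linear_combination (((Real.sqrt 3 : ℂ))^2/4) * Complex.I_sq - (1/4 : ℂ) * h2
  · refine ⟨-2, 1, ?_⟩
    rw [omegaD, if_pos (by decide)]
    have h2 := sqrt_sq' 7
    push_cast at h2 ⊢
    linear_combination (((Real.sqrt 7 : ℂ))^2/4) * Complex.I_sq - (1/4 : ℂ) * h2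
  · refine ⟨-3, 1, ?_⟩
    rw [omegaD, if_pos (by decide)]
    have h2 := sqrt_sq' 11
    push_cast at h2 ⊢
    linear_combination (((Real.sqrt 11 : ℂ))^2/4) * Complex.I_sq - (1/4 : ℂ) * h2
lemma ri_mul (d : ℕ) (hd : d ∈ ({1, 2, 3, 7, 11} : Set ℕ)) {x y : ℂ}
    (hx : x ∈ ringInt d) (hy : y ∈ ringInt d) : x * y ∈ ringInt d := by
  obtain ⟨a, b, rfl⟩ := hx; obtain ⟨c, e, rfl⟩ := hy
  obtain ⟨A, B, hAB⟩ := omega_sq d hd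
  exact ⟨a * c + b * e * A, a * e + b * c + b * e * B, by push_cast; linear_combination (b:ℂ) * e * hAB⟩
lemma ri_conj (d : ℕ) (hd : d ∈ ({1, 2, 3, 7, 11} : Set ℕ)) {x : ℂ}
    (hx : x ∈ ringInt d) : (starRingEnd ℂ) x ∈ ringInt d := by
  obtain ⟨a, b, rfl⟩ := hx
  by_cases h : d % 4 = 3
  · have hω : (starRingEnd ℂ) (omegaD d) = 1 - omegaD d := by
      rw [omegaD, if_pos h]
      simp [map_div₀, map_add, Complex.conj_I, Complex.conj_ofReal, map_ofNat]
      ring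
    refine ⟨a + b, -b, ?_⟩
    rw [map_add, map_mul, hω, map_intCast (starRingEnd ℂ), map_intCast (starRingEnd ℂ)]
    push_cast; ring
  · have hω : (starRingEnd ℂ) (omegaD d) = - omegaD d := by
      rw [omegaD, if_neg h]
      simp [Complex.conj_I, Complex.conj_ofReal]
    refine ⟨a, -b, ?_⟩
    rw [map_add, map_mul, hω, map_intCast (starRingEnd ℂ), map_intCast (starRingEnd ℂ)]
    push_cast; ring
lemma ri_unit (d : ℕ) (hd : d ∈ ({1, 2, 3, 7, 11} : Set ℕ)) {w : ℂ}
    (hw : w ∈ ringInt d) (habs : ‖w‖ = 1) :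
    ∃ w', w' ∈ ringInt d ∧ w * w' = 1 := by
  refine ⟨(starRingEnd ℂ) w, ri_conj d hd hw, ?_⟩
  rw [Complex.mul_conj]
  rw [Complex.normSq_eq_norm_sq, habs]
  norm_num
lemma divC_smul {c : ℂ} (hc : c ≠ 0) (p q : ℂ) : divC (c * p) (c * q) = divC p q := by
  unfold divC
  by_cases hq : q = 0
  · simp [hq]
  · rw [if_neg hq, if_neg (mul_ne_zero hc hq), mul_div_mul_left _ _ hc]
lemma Sprod_congr (a b : ℕ → ℂ) (k : ℕ) (h : ∀ j, 1 ≤ j → j ≤ k → a j = b j) :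
    Sprod a k = Sprod b k := by
  induction k with
  | zero => rfl
  | succ m ih =>
    show Sprod a m * Smat (a (m+1)) = Sprod b m * Smat (b (m+1))
    rw [ih (fun j h1 h2 => h j h1 (h2.trans (Nat.le_succ m))),
        h (m+1) (Nat.le_add_left 1 m) (le_refl _)]
lemma Sprod_det (a : ℕ → ℂ) (k : ℕ) : (Sprod a k).det = (-1 : ℂ) ^ k := by
  induction k with
  | zero => simp [Sprod]
  | succ m ih =>
    show (Sprod a m * Smat (a (m+1))).det = _
    rw [Matrix.det_mul, ih, Smat, Matrix.det_fin_two_of]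
    ring
lemma Smat_entries (c : ℂ) : Smat c 0 0 = c ∧ Smat c 0 1 = 1 ∧ Smat c 1 0 = 1 ∧ Smat c 1 1 = 0 := by
  refine ⟨?_, ?_, ?_, ?_⟩ <;> simp [Smat]
lemma mul_Smat (M : Matrix (Fin 2) (Fin 2) ℂ) (c : ℂ) :
    (M * Smat c) 0 0 = M 0 0 * c + M 0 1 ∧ (M * Smat c) 1 0 = M 1 0 * c + M 1 1 := by
  constructor <;> simp [Smat, Matrix.mul_apply, Fin.sum_univ_two]
lemma Sprod_zero (a : ℕ → ℂ) : Sprod a 0 0 0 = 1 ∧ Sprod a 0 1 0 = 0 := by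
  constructor <;> simp [Sprod, Matrix.one_apply]
lemma Sprod_mem (d : ℕ) (hd : d ∈ ({1, 2, 3, 7, 11} : Set ℕ)) (a : ℕ → ℂ) (k : ℕ)
    (ha : ∀ j, 1 ≤ j → j ≤ k → a j ∈ ringInt d) :
    ∀ i j, Sprod a k i j ∈ ringInt d := by
  induction k with
  | zero =>
    intro i j
    by_cases h : i = j
    · rw [show Sprod a 0 = 1 from rfl, h, Matrix.one_apply_eq]; exact ri_one d
    · rw [show Sprod a 0 = 1 from rfl, Matrix.one_apply_ne h]; exact ri_zero d
  | succ m ih =>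
    intro i j
    have ih' := ih (fun j h1 h2 => ha j h1 (h2.trans (Nat.le_succ m)))
    have ham : a (m+1) ∈ ringInt d := ha (m+1) (Nat.le_add_left 1 m) (le_refl _)
    show (Sprod a m * Smat (a (m+1))) i j ∈ ringInt d
    rw [Matrix.mul_apply, Fin.sum_univ_two]
    have h0 : ∀ i' j', Smat (a (m+1)) i' j' ∈ ringInt d := by
      intro i' j'
      fin_cases i' <;> fin_cases j' <;>
        simp [Smat] <;> first | exact ham | exact ri_one d | exact ri_zero d
    exact ri_add d (ri_mul d hd (ih' i 0) (h0 0 j)) (ri_mul d hd (ih' i 1) (h0 1 j))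
lemma coprime_of_det (d : ℕ) (hd : d ∈ ({1, 2, 3, 7, 11} : Set ℕ)) (k : ℕ)
    (M : Matrix (Fin 2) (Fin 2) ℂ) (hM : ∀ i j, M i j ∈ ringInt d)
    (hdet : M.det = (-1 : ℂ) ^ k) : CoprimeIn d (M 0 0) (M 1 0) := by
  refine ⟨(-1 : ℂ) ^ k * M 1 1, -((-1 : ℂ) ^ k * M 0 1), ?_, ?_, ?_⟩
  · exact ri_mul d hd (ri_negonepow d k) (hM 1 1)
  · exact ri_neg d (ri_mul d hd (ri_negonepow d k) (hM 0 1))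
  · rw [Matrix.det_fin_two] at hdet
    have h1 : ((-1 : ℂ) ^ k) * ((-1 : ℂ) ^ k) = 1 := by
      rw [← pow_add, ← two_mul, pow_mul]; norm_num
    calc (-1:ℂ)^k * M 1 1 * M 0 0 + (-((-1:ℂ)^k * M 0 1)) * M 1 0
        = (-1:ℂ)^k * (M 0 0 * M 1 1 - M 0 1 * M 1 0) := by ring
      _ = (-1:ℂ)^k * (-1:ℂ)^k := by rw [hdet]
      _ = 1 := h1
lemma rep_unique (d : ℕ) (hd : d ∈ ({1, 2, 3, 7, 11} : Set ℕ)) (p₁ q₁ p₂ q₂ : ℂ)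
    (hp₁ : p₁ ∈ ringInt d) (hq₁ : q₁ ∈ ringInt d) (hp₂ : p₂ ∈ ringInt d) (hq₂ : q₂ ∈ ringInt d)
    (hc₁ : CoprimeIn d p₁ q₁) (hc₂ : CoprimeIn d p₂ q₂)
    (heq : divC p₁ q₁ = divC p₂ q₂) :
    ∃ ε ε' : ℂ, ε ∈ ringInt d ∧ ε' ∈ ringInt d ∧ ε * ε' = 1 ∧ p₂ = ε * p₁ ∧ q₂ = ε * q₁ := by
  obtain ⟨u₁, v₁, hu₁, hv₁, hb₁⟩ := hc₁
  obtain ⟨u₂, v₂, hu₂, hv₂, hb₂⟩ := hc₂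
  by_cases h1 : q₁ = 0
  · have h2 : q₂ = 0 := by
      by_contra h2
      rw [divC, if_pos h1, divC, if_neg h2] at heq
      exact (OnePoint.infty_ne_coe _) heq
    subst h1; subst h2
    rw [mul_zero, add_zero] at hb₁ hb₂
    refine ⟨p₂ * u₁, p₁ * u₂, ri_mul d hd hp₂ hu₁, ri_mul d hd hp₁ hu₂, ?_, ?_, by ring⟩
    · linear_combination (u₂ * p₂) * hb₁ + hb₂
    · linear_combination -p₂ * hb₁
  · have h2 : q₂ ≠ 0 := by
      intro h2
      rw [divC, if_neg h1, divC, if_pos h2] at heq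
      exact (OnePoint.coe_ne_infty _) heq
    rw [divC, if_neg h1, divC, if_neg h2, OnePoint.coe_eq_coe,
      div_eq_div_iff h1 h2] at heq
    have hA : q₂ = (u₁ * p₂ + v₁ * q₂) * q₁ := by linear_combination -q₂ * hb₁ + u₁ * heq
    have hB : q₁ = (u₂ * p₁ + v₂ * q₁) * q₂ := by linear_combination -q₁ * hb₂ - u₂ * heq
    refine ⟨u₁ * p₂ + v₁ * q₂, u₂ * p₁ + v₂ * q₁,
      ri_add d (ri_mul d hd hu₁ hp₂) (ri_mul d hd hv₁ hq₂),
      ri_add d (ri_mul d hd hu₂ hp₁) (ri_mul d hd hv₂ hq₁), ?_, ?_, hA⟩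
    · refine mul_right_cancel₀ h1 ?_
      linear_combination -(u₂ * p₁ + v₂ * q₁) * hA - hB
    · refine mul_right_cancel₀ h1 ?_
      linear_combination -heq + p₁ * hA
lemma ri_sub (d : ℕ) {x y : ℂ} (hx : x ∈ ringInt d) (hy : y ∈ ringInt d) :
    x - y ∈ ringInt d := by
  rw [sub_eq_add_neg]; exact ri_add d hx (ri_neg d hy)

/-- For `d ∈ {1,2,3,7,11}` and `x ∈ ℚ(√(-d))`, elements
`R₁, …, R_n` of `ℚ(√(-d)) ∪ {∞}` with `R_n = x` are the consecutive convergents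
of a continued fraction expansion of `x` with partial quotients in `ℤ[ω_d]`
(i.e. `R_k = (S_{a₁} ⋯ S_{a_k})(∞)`) if and only if `∞ → R₁ → ⋯ → R_n` is a
walk in the Farey graph `E_d`. -/
theorem convergents_iff_walk (d : ℕ) (hd : d ∈ ({1, 2, 3, 7, 11} : Set ℕ))
    (x : ℂ) (hx : inK d x) (n : ℕ) (hn : 1 ≤ n)
    (R : ℕ → OnePoint ℂ) (hR : R n = ((x : ℂ) : OnePoint ℂ)) :
    (∃ a : ℕ → ℂ, (∀ k, 1 ≤ k → k ≤ n → a k ∈ ringInt d) ∧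
        ∀ k, 1 ≤ k → k ≤ n → R k = divC (Sprod a k 0 0) (Sprod a k 1 0)) ↔
      IsWalk d n (fun k => if k = 0 then OnePoint.infty else R k) := by
  constructor
  · rintro ⟨a, ha, hRk⟩
    intro k hk
    have hmem : ∀ j, j ≤ n → ∀ i i', Sprod a j i i' ∈ ringInt d := fun j hj =>
      Sprod_mem d hd a j (fun l h1 h2 => ha l h1 (h2.trans hj))
    have hg : ∀ j, j ≤ n →
        (if j = 0 then OnePoint.infty else R j) = divC (Sprod a j 0 0) (Sprod a j 1 0) := by
      intro j hj
      rcases Nat.eq_zero_or_pos j with rfl | hj1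
      · rw [if_pos rfl, (Sprod_zero a).1, (Sprod_zero a).2, divC, if_pos rfl]
      · rw [if_neg (Nat.pos_iff_ne_zero.mp hj1)]; exact hRk j hj1 hj
    refine ⟨Sprod a k 0 0, Sprod a k 1 0, Sprod a (k+1) 0 0, Sprod a (k+1) 1 0,
      hmem k hk.le 0 0, hmem k hk.le 1 0, hmem (k+1) hk 0 0, hmem (k+1) hk 1 0,
      coprime_of_det d hd k _ (hmem k hk.le) (Sprod_det a k),
      coprime_of_det d hd (k+1) _ (hmem (k+1) hk) (Sprod_det a (k+1)),
      hg k hk.le, hg (k+1) hk, ?_⟩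
    have h00 : Sprod a (k+1) 0 0 = Sprod a k 0 0 * a (k+1) + Sprod a k 0 1 :=
      (mul_Smat (Sprod a k) (a (k+1))).1
    have h10 : Sprod a (k+1) 1 0 = Sprod a k 1 0 * a (k+1) + Sprod a k 1 1 :=
      (mul_Smat (Sprod a k) (a (k+1))).2
    have hdet := Sprod_det a k
    rw [Matrix.det_fin_two] at hdet
    have heq : Sprod a k 0 0 * Sprod a (k+1) 1 0 - Sprod a (k+1) 0 0 * Sprod a k 1 0
        = (-1:ℂ)^k := by
      rw [h00, h10]; linear_combination hdet
    rw [heq, norm_pow]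
    simp
  · intro hW
    have h1m : ∀ m : ℕ, ((-1:ℂ)^m)*((-1:ℂ)^m) = 1 := by
      intro m; rw [← pow_add, ← two_mul, pow_mul]; norm_num
    have key : ∀ m, m ≤ n → ∃ a : ℕ → ℂ, (∀ k, 1 ≤ k → k ≤ m → a k ∈ ringInt d) ∧
        ∀ k, k ≤ m →
          (if k = 0 then OnePoint.infty else R k) = divC (Sprod a k 0 0) (Sprod a k 1 0) := by
      intro m
      induction m with
      | zero =>
        intro _
        refine ⟨fun _ => 0, fun k h1 h2 => absurd (h1.trans h2) (by norm_num), ?_⟩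
        intro k hk
        have : k = 0 := Nat.le_zero.mp hk
        subst this
        rw [if_pos rfl, (Sprod_zero _).1, (Sprod_zero _).2, divC, if_pos rfl]
      | succ m ih =>
        intro hmn
        obtain ⟨a, hamem, hadiv⟩ := ih (le_of_lt hmn)
        set M := Sprod a m with hM
        have hMmem : ∀ i j, M i j ∈ ringInt d := Sprod_mem d hd a m hamem
        have hMdet : M.det = (-1:ℂ)^m := Sprod_det a m
        have hcop : CoprimeIn d (M 0 0) (M 1 0) := coprime_of_det d hd m M hMmem hMdet
        obtain ⟨p₂, q₂, p₃, q₃, hp₂, hq₂, hp₃, hq₃, hc₂, hc₃, he₂, he₃, habs⟩ :=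
          hW m (lt_of_lt_of_le (Nat.lt_succ_self m) hmn)
        have hdm : (if m = 0 then OnePoint.infty else R m) = divC (M 0 0) (M 1 0) :=
          hadiv m (le_refl m)
        have heq : divC (M 0 0) (M 1 0) = divC p₂ q₂ := hdm.symm.trans he₂
        obtain ⟨ε, ε', hε, hε', hεε, hpε, hqε⟩ :=
          rep_unique d hd (M 0 0) (M 1 0) p₂ q₂ (hMmem 0 0) (hMmem 1 0) hp₂ hq₂ hcop hc₂ heq
        have hwmem : p₂ * q₃ - p₃ * q₂ ∈ ringInt d :=
          ri_sub d (ri_mul d hd hp₂ hq₃) (ri_mul d hd hp₃ hq₂)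
        obtain ⟨w', hw', hww⟩ := ri_unit d hd hwmem habs
        set β : ℂ := (-1:ℂ)^m * (M 0 0 * q₃ - M 1 0 * p₃) with hβ
        set βi : ℂ := (-1:ℂ)^m * (ε * w') with hβi
        have hβmul : β * βi = 1 := by
          calc β * βi
              = (((-1:ℂ)^m)*((-1:ℂ)^m)) * ((ε * (M 0 0) * q₃ - ε * (M 1 0) * p₃) * w') := by
                rw [hβ, hβi]; ring
            _ = (p₂ * q₃ - p₃ * q₂) * w' := by rw [h1m m, ← hpε, ← hqε]; ring
            _ = 1 := hww
        have hβimem : βi ∈ ringInt d :=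
          ri_mul d hd (ri_negonepow d m) (ri_mul d hd hε hw')
        set α : ℂ := (-1:ℂ)^m * (M 1 1 * p₃ - M 0 1 * q₃) with hα
        have hαmem : α ∈ ringInt d :=
          ri_mul d hd (ri_negonepow d m)
            (ri_sub d (ri_mul d hd (hMmem 1 1) hp₃) (ri_mul d hd (hMmem 0 1) hq₃))
        have hcmem : α * βi ∈ ringInt d := ri_mul d hd hαmem hβimem
        set a' : ℕ → ℂ := Function.update a (m+1) (α * βi) with ha'
        have hSpeq : ∀ k, k ≤ m → Sprod a' k = Sprod a k := by
          intro k hk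
          exact Sprod_congr a' a k (fun j h1 h2 => Function.update_of_ne (by omega) _ _)
        have hS1 : Sprod a' (m+1) = M * Smat (α * βi) := by
          show Sprod a' m * Smat (a' (m+1)) = M * Smat (α * βi)
          rw [hSpeq m (le_refl m), ha', Function.update_self, hM]
        have hdet2 := hMdet
        rw [Matrix.det_fin_two] at hdet2
        have key1 : M 0 0 * α + M 0 1 * β = p₃ := by
          rw [hα, hβ]
          linear_combination ((-1:ℂ)^m * p₃) * hdet2 + p₃ * h1m m
        have key2 : M 1 0 * α + M 1 1 * β = q₃ := by
          rw [hα, hβ]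
          linear_combination ((-1:ℂ)^m * q₃) * hdet2 + q₃ * h1m m
        have hN0 : Sprod a' (m+1) 0 0 = βi * p₃ := by
          rw [hS1, (mul_Smat M (α * βi)).1]
          linear_combination βi * key1 - M 0 1 * hβmul
        have hN1 : Sprod a' (m+1) 1 0 = βi * q₃ := by
          rw [hS1, (mul_Smat M (α * βi)).2]
          linear_combination βi * key2 - M 1 1 * hβmul
        have hβine : βi ≠ 0 := fun h => one_ne_zero (by rw [← hβmul, h, mul_zero])
        refine ⟨a', ?_, ?_⟩
        · intro k h1 h2
          rcases Nat.lt_or_ge k (m+1) with h | h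
          · rw [ha', Function.update_of_ne (by omega)]; exact hamem k h1 (by omega)
          · have hk1 : k = m+1 := le_antisymm h2 h
            rw [hk1, ha', Function.update_self]; exact hcmem
        · intro k hk
          rcases Nat.lt_or_ge k (m+1) with h | h
          · rw [hSpeq k (by omega)]; exact hadiv k (by omega)
          · have hk1 : k = m+1 := le_antisymm hk h
            subst hk1
            rw [hN0, hN1, divC_smul hβine]
            exact he₃
    obtain ⟨a, ha, hdiv⟩ := key n (le_refl n)
    refine ⟨a, ha, ?_⟩
    intro k h1 h2
    have h := hdiv k h2
    rwa [if_neg (by omega)] at h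
end

section
/- Let d ∈ {1,2,3,7,11} and let W_d ⊂ ℂ be the fundamental polygon: for d ∈ {1,2} the closed rectangle with vertices 0, 1, ω_d, ω_d + 1, and for d ∈ {3,7,11} the closed triangle with vertices 0, 1, ω_d. Suppose R₁ → R₂ is an edge of the Farey graph E_d and R₁ lies in the interior of W_d. Then either R₂ = ∞ or R₂ lies in (the closure of) W_d. -/
/-- The fundamental polygon `W_d ⊆ ℂ`: the closed rectangle with vertices
`0, 1, ω_d, ω_d + 1` for `d ∈ {1,2}` (i.e. `d ≢ 3 mod 4`), and the closed
triangle with vertices `0, 1, ω_d` for `d ∈ {3,7,11}` (i.e. `d ≡ 3 mod 4`). -/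
def Wpolygon (d : ℕ) : Set ℂ :=
  if d % 4 = 3 then convexHull ℝ {0, 1, omegaD d}
  else convexHull ℝ {0, 1, omegaD d, omegaD d + 1}


open Complex in
private lemma dummy_open_marker : True := trivial

open Complex


lemma omegaD_eq_of_mod (d : ℕ) (h : d % 4 = 3) :
    omegaD d = ((1/2 : ℝ) : ℂ) + ((Real.sqrt d / 2 : ℝ) : ℂ) * Complex.I := by
  rw [omegaD, if_pos h]; push_cast; ring

lemma omegaD_eq_of_not (d : ℕ) (h : ¬ d % 4 = 3) :
    omegaD d = ((Real.sqrt d : ℝ) : ℂ) * Complex.I := by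
  rw [omegaD, if_neg h]; ring

lemma omegaD_re (d : ℕ) : (omegaD d).re = if d % 4 = 3 then 1/2 else 0 := by
  by_cases h : d % 4 = 3 <;> simp [omegaD_eq_of_mod d, omegaD_eq_of_not d, h]

lemma omegaD_im (d : ℕ) : (omegaD d).im = if d % 4 = 3 then Real.sqrt d / 2 else Real.sqrt d := by
  by_cases h : d % 4 = 3 <;> simp [omegaD_eq_of_mod d, omegaD_eq_of_not d, h]

lemma sqrtd_sq (d : ℕ) : ((Real.sqrt d : ℝ) : ℂ) ^ 2 = (d : ℂ) := by
  rw [← Complex.ofReal_pow, Real.sq_sqrt (by positivity : (0:ℝ) ≤ (d:ℝ))]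
  simp

lemma omegaD_sq (d : ℕ) : ∃ u v : ℤ, (omegaD d) ^ 2 = (u : ℂ) + (v : ℂ) * omegaD d := by
  by_cases h : d % 4 = 3
  · obtain ⟨k, hk⟩ : ∃ k : ℕ, d = 4 * k + 3 := ⟨d / 4, by omega⟩
    refine ⟨-(k + 1), 1, ?_⟩
    rw [omegaD, if_pos h]
    have hs := sqrtd_sq d
    have hd : (d : ℂ) = 4 * k + 3 := by exact_mod_cast congrArg (Nat.cast : ℕ → ℂ) hk
    push_cast
    linear_combination (((Real.sqrt d : ℝ) : ℂ)^2/4) * Complex.I_sq - (1/4 : ℂ) * hs - (1/4 : ℂ) * hd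
  · refine ⟨-(d : ℤ), 0, ?_⟩
    rw [omegaD, if_neg h]
    have hs := sqrtd_sq d
    push_cast
    linear_combination (((Real.sqrt d : ℝ) : ℂ)^2) * Complex.I_sq - hs

lemma conj_omegaD (d : ℕ) :
    (starRingEnd ℂ) (omegaD d) = if d % 4 = 3 then 1 - omegaD d else -omegaD d := by
  by_cases h : d % 4 = 3
  · rw [if_pos h, omegaD_eq_of_mod d h]
    simp only [map_add, map_mul, Complex.conj_I, Complex.conj_ofReal, map_one]
    push_cast; ring
  · rw [if_neg h, omegaD_eq_of_not d h]
    simp only [map_mul, Complex.conj_I, Complex.conj_ofReal]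
    ring


lemma ringInt_int_mem {d : ℕ} (n : ℤ) : (n : ℂ) ∈ ringInt d := ⟨n, 0, by simp⟩
lemma ringInt_zero_mem {d : ℕ} : (0 : ℂ) ∈ ringInt d := by simpa using ringInt_int_mem (d := d) 0
lemma ringInt_one_mem {d : ℕ} : (1 : ℂ) ∈ ringInt d := by simpa using ringInt_int_mem (d := d) 1
lemma ringInt_omega_mem {d : ℕ} : omegaD d ∈ ringInt d := ⟨0, 1, by simp⟩

lemma ringInt_add_mem {d : ℕ} {x y : ℂ} (hx : x ∈ ringInt d) (hy : y ∈ ringInt d) : x + y ∈ ringInt d := by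
  obtain ⟨a, b, rfl⟩ := hx; obtain ⟨c, e, rfl⟩ := hy
  exact ⟨a + c, b + e, by push_cast; ring⟩

lemma ringInt_neg_mem {d : ℕ} {x : ℂ} (hx : x ∈ ringInt d) : -x ∈ ringInt d := by
  obtain ⟨a, b, rfl⟩ := hx; exact ⟨-a, -b, by push_cast; ring⟩

lemma ringInt_sub_mem {d : ℕ} {x y : ℂ} (hx : x ∈ ringInt d) (hy : y ∈ ringInt d) : x - y ∈ ringInt d := by
  simpa [sub_eq_add_neg] using ringInt_add_mem hx (ringInt_neg_mem hy)

lemma ringInt_mul_mem {d : ℕ} {x y : ℂ} (hx : x ∈ ringInt d) (hy : y ∈ ringInt d) : x * y ∈ ringInt d := by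
  obtain ⟨a, b, rfl⟩ := hx; obtain ⟨c, e, rfl⟩ := hy
  obtain ⟨u, v, huv⟩ := omegaD_sq d
  exact ⟨a * c + b * e * u, a * e + b * c + b * e * v, by push_cast; linear_combination (b : ℂ) * e * huv⟩

lemma ringInt_conj_mem {d : ℕ} {x : ℂ} (hx : x ∈ ringInt d) : (starRingEnd ℂ) x ∈ ringInt d := by
  obtain ⟨a, b, rfl⟩ := hx
  rw [map_add, map_mul, map_intCast, map_intCast, conj_omegaD d]
  by_cases h : d % 4 = 3
  · rw [if_pos h]; exact ⟨a + b, -b, by push_cast; ring⟩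
  · rw [if_neg h]; exact ⟨a, -b, by push_cast; ring⟩

lemma ringInt_im_quant {d : ℕ} {x : ℂ} (hx : x ∈ ringInt d) : ∃ b : ℤ, x.im = (b : ℝ) * (omegaD d).im := by
  obtain ⟨a, b, rfl⟩ := hx
  exact ⟨b, by simp [Complex.add_im, Complex.mul_im]⟩

lemma ringInt_re_quant {d : ℕ} (h : ¬ d % 4 = 3) {x : ℂ} (hx : x ∈ ringInt d) : ∃ a : ℤ, x.re = (a : ℝ) := by
  obtain ⟨a, b, rfl⟩ := hx
  refine ⟨a, by simp [Complex.add_re, Complex.mul_re, omegaD_re d, omegaD_im d, h]⟩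



lemma convex_halfplane (w : ℂ) (c : ℝ) : Convex ℝ {x : ℂ | (w * x).im ≤ c} := by
  refine convex_halfSpace_le ?_ c
  constructor
  · intro x y; simp [mul_add]
  · intro r x
    simp only [Complex.real_smul, smul_eq_mul]
    rw [show w * ((r:ℂ) * x) = (r:ℂ) * (w * x) by ring]
    simp [Complex.mul_im]

lemma interior_lt {S : Set ℂ} {w : ℂ} (hw : w ≠ 0) {c : ℝ}
    (hS : ∀ x ∈ S, (w * x).im ≤ c) {z : ℂ} (hz : z ∈ interior S) :
    (w * z).im < c := by
  obtain ⟨ε, hε, hball⟩ := Metric.mem_nhds_iff.mp (mem_interior_iff_mem_nhds.mp hz)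
  have hwa : 0 < ‖w‖ := norm_pos_iff.mpr hw
  set r : ℝ := ε / (2 * ‖w‖) with hr
  have hrpos : 0 < r := by positivity
  set u : ℂ := (r : ℂ) * (Complex.I * (starRingEnd ℂ) w) with hu
  have habs_u : ‖u‖ = ε / 2 := by
    rw [hu, norm_mul, norm_mul, Complex.norm_real, Complex.norm_I, Complex.norm_conj, one_mul,
      Real.norm_eq_abs, abs_of_pos hrpos, hr]
    field_simp
  have humem : z + u ∈ S := by
    apply hball
    have hdist : dist (z + u) z = ε / 2 := by
      rw [Complex.dist_eq, add_sub_cancel_left, habs_u]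
    exact Metric.mem_ball.mpr (by rw [hdist]; linarith)
  have hwu : w * u = ((r * Complex.normSq w : ℝ) : ℂ) * Complex.I := by
    have h1 : w * (starRingEnd ℂ) w = (Complex.normSq w : ℂ) := Complex.mul_conj w
    calc w * u = (r : ℂ) * Complex.I * (w * (starRingEnd ℂ) w) := by rw [hu]; ring
    _ = ((r * Complex.normSq w : ℝ) : ℂ) * Complex.I := by rw [h1]; push_cast; ring
  have h2 := hS _ humem
  have h3 : (w * (z + u)).im = (w * z).im + r * Complex.normSq w := by
    rw [mul_add, Complex.add_im, hwu]
    simp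
  have h4 : 0 < r * Complex.normSq w := mul_pos hrpos (Complex.normSq_pos.mpr hw)
  rw [h3] at h2
  linarith

set_option maxHeartbeats 1000000 in
lemma key_contra (δ c : ℝ) (w z₁ z₂ q₁ q₂ : ℂ) (hδ : 0 < δ)
    (hq₁ : q₁ ≠ 0) (hq₂ : q₂ ≠ 0)
    (hdist : ‖z₁ - z₂‖ * (‖q₁‖ * ‖q₂‖) = 1)
    (h1 : ∃ n : ℤ, (c - (w * z₁).im) * Complex.normSq q₁ = (n : ℝ) * δ)
    (h2 : ∃ n : ℤ, ((w * z₂).im - c) * Complex.normSq q₂ = (n : ℝ) * δ)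
    (hz1 : (w * z₁).im < c) (hz2 : c < (w * z₂).im)
    (hw : ‖w‖ < 2 * δ) : False := by
  obtain ⟨n, hn⟩ := h1; obtain ⟨m, hm⟩ := h2
  set x := ‖q₁‖ with hx
  set y := ‖q₂‖ with hy
  have hxp : 0 < x := norm_pos_iff.mpr hq₁
  have hyp : 0 < y := norm_pos_iff.mpr hq₂
  have hnx : Complex.normSq q₁ = x ^ 2 := (Complex.sq_norm q₁).symm
  have hny : Complex.normSq q₂ = y ^ 2 := (Complex.sq_norm q₂).symm
  set A := c - (w * z₁).im with hA
  set B := (w * z₂).im - c with hB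
  have hApos : 0 < A := by rw [hA]; linarith
  have hBpos : 0 < B := by rw [hB]; linarith
  have hAq : δ ≤ A * x ^ 2 := by
    rw [← hnx, hn]
    have hnpos : (0 : ℝ) < (n : ℝ) * δ := by
      rw [← hn, hnx]; exact mul_pos hApos (pow_pos hxp 2)
    have hn1 : (0 : ℝ) < (n : ℝ) := by nlinarith
    have hn2 : (0 : ℤ) < n := by exact_mod_cast hn1
    have hn3 : (1 : ℝ) ≤ (n : ℝ) := by exact_mod_cast hn2
    nlinarith
  have hBq : δ ≤ B * y ^ 2 := by
    rw [← hny, hm]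
    have hmpos : (0 : ℝ) < (m : ℝ) * δ := by
      rw [← hm, hny]; exact mul_pos hBpos (pow_pos hyp 2)
    have hm1 : (0 : ℝ) < (m : ℝ) := by nlinarith
    have hm2 : (0 : ℤ) < m := by exact_mod_cast hm1
    have hm3 : (1 : ℝ) ≤ (m : ℝ) := by exact_mod_cast hm2
    nlinarith
  have hsum : A + B ≤ ‖w‖ * ‖z₁ - z₂‖ := by
    have h5 : A + B = (w * (z₂ - z₁)).im := by
      rw [hA, hB, mul_sub, Complex.sub_im]; ring
    rw [h5]
    calc (w * (z₂ - z₁)).im ≤ |(w * (z₂ - z₁)).im| := le_abs_self _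
    _ ≤ ‖w * (z₂ - z₁)‖ := Complex.abs_im_le_norm _
    _ = ‖w‖ * ‖z₁ - z₂‖ := by
        rw [norm_mul, norm_sub_rev]
  have h6 : (A + B) * (x * y) ≤ ‖w‖ := by
    calc (A + B) * (x * y) ≤ ‖w‖ * ‖z₁ - z₂‖ * (x * y) :=
          mul_le_mul_of_nonneg_right hsum (le_of_lt (mul_pos hxp hyp))
    _ = ‖w‖ * (‖z₁ - z₂‖ * (x * y)) := by ring
    _ = ‖w‖ := by rw [hdist, mul_one]
  have hxy : 0 < x * y := mul_pos hxp hyp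
  have e1 := mul_le_mul_of_nonneg_right hAq (sq_nonneg y)
  have e2 := mul_le_mul_of_nonneg_right hBq (sq_nonneg x)
  have e3 : 2 * δ * (x * y) ≤ δ * y ^ 2 + δ * x ^ 2 := by nlinarith [sq_nonneg (x - y)]
  have e4 : (A + B) * (x * y) * (x * y) ≤ ‖w‖ * (x * y) :=
    mul_le_mul_of_nonneg_right h6 hxy.le
  have e5 : ‖w‖ * (x * y) < 2 * δ * (x * y) := by nlinarith
  nlinarith


-- generic: convex combination of three / four points in hull
lemma mem_hull3 {a b c z : ℂ} {α β γ : ℝ} (hα : 0 ≤ α) (hβ : 0 ≤ β) (hγ : 0 ≤ γ)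
    (hsum : α + β + γ = 1) (hz : z = α • a + β • b + γ • c) :
    z ∈ convexHull ℝ ({a, b, c} : Set ℂ) := by
  rw [convexHull_eq]
  refine ⟨Fin 3, Finset.univ, ![α, β, γ], ![a, b, c], ?_, ?_, ?_, ?_⟩
  · intro i _; fin_cases i <;> assumption
  · simp [Fin.sum_univ_three]; linarith
  · intro i _; fin_cases i <;> simp
  · rw [Finset.centerMass_eq_of_sum_1]
    · simp [Fin.sum_univ_three, hz]
    · simp [Fin.sum_univ_three]; linarith

lemma mem_hull4 {a b c e z : ℂ} {α β γ η : ℝ} (hα : 0 ≤ α) (hβ : 0 ≤ β) (hγ : 0 ≤ γ)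
    (hη : 0 ≤ η) (hsum : α + β + γ + η = 1) (hz : z = α • a + β • b + γ • c + η • e) :
    z ∈ convexHull ℝ ({a, b, c, e} : Set ℂ) := by
  rw [convexHull_eq]
  refine ⟨Fin 4, Finset.univ, ![α, β, γ, η], ![a, b, c, e], ?_, ?_, ?_, ?_⟩
  · intro i _; fin_cases i <;> assumption
  · simp [Fin.sum_univ_four]; linarith
  · intro i _; fin_cases i <;> simp
  · rw [Finset.centerMass_eq_of_sum_1]
    · simp [Fin.sum_univ_four, hz]
    · simp [Fin.sum_univ_four]; linarith

lemma quant_im {d : ℕ} {v q : ℂ} (hv : v ∈ ringInt d) (hqm : q ∈ ringInt d) (hq : q ≠ 0)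
    {x : ℝ} (hx : x = (v / q).im) :
    ∃ n : ℤ, x * Complex.normSq q = (n : ℝ) * (omegaD d).im := by
  obtain ⟨b, hb⟩ := ringInt_im_quant (ringInt_mul_mem hv (ringInt_conj_mem hqm))
  refine ⟨b, ?_⟩
  have h1 : v * (starRingEnd ℂ) q = (v / q) * ((Complex.normSq q : ℝ) : ℂ) := by
    rw [← Complex.mul_conj]; field_simp
  have h2 : (v * (starRingEnd ℂ) q).im = (v / q).im * Complex.normSq q := by
    rw [h1]; simp [Complex.mul_im]
  rw [hx, ← h2, hb]

lemma quant_re {d : ℕ} (h3 : ¬ d % 4 = 3) {v q : ℂ} (hv : v ∈ ringInt d) (hqm : q ∈ ringInt d)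
    (hq : q ≠ 0) {x : ℝ} (hx : x = (v / q).re) :
    ∃ n : ℤ, x * Complex.normSq q = (n : ℝ) * 1 := by
  obtain ⟨a, ha⟩ := ringInt_re_quant h3 (ringInt_mul_mem hv (ringInt_conj_mem hqm))
  refine ⟨a, ?_⟩
  have h1 : v * (starRingEnd ℂ) q = (v / q) * ((Complex.normSq q : ℝ) : ℂ) := by
    rw [← Complex.mul_conj]; field_simp
  have h2 : (v * (starRingEnd ℂ) q).re = (v / q).re * Complex.normSq q := by
    rw [h1]; simp [Complex.mul_re]
  rw [hx, ← h2, ha, mul_one]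

set_option maxHeartbeats 4000000 in
/-- Let `d ∈ {1,2,3,7,11}`. If `R₁ → R₂` is an edge of the
Farey graph `E_d` and `R₁` lies in the interior of the fundamental polygon
`W_d`, then either `R₂ = ∞` or `R₂` lies in (the closure of) `W_d`. -/
theorem farey_neighbour_of_interior (d : ℕ) (hd : d ∈ ({1, 2, 3, 7, 11} : Set ℕ))
    (R₁ R₂ : OnePoint ℂ) (hadj : FareyAdj d R₁ R₂)
    (z₁ : ℂ) (hR₁ : R₁ = ((z₁ : ℂ) : OnePoint ℂ)) (hz₁ : z₁ ∈ interior (Wpolygon d)) :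
    R₂ = OnePoint.infty ∨ ∃ z₂ ∈ Wpolygon d, R₂ = ((z₂ : ℂ) : OnePoint ℂ) := by
  obtain ⟨p₁, q₁, p₂, q₂, hp₁, hq₁m, hp₂, hq₂m, -, -, hx1, hx2, habs⟩ := hadj
  simp only [Set.mem_insert_iff, Set.mem_singleton_iff] at hd
  have hd1 : 1 ≤ d := by omega
  have hd0 : (0 : ℝ) < (d : ℝ) := by exact_mod_cast Nat.lt_of_lt_of_le Nat.zero_lt_one hd1
  have hs0 : 0 < Real.sqrt d := Real.sqrt_pos.mpr hd0
  have hssq : Real.sqrt d ^ 2 = (d : ℝ) := Real.sq_sqrt (le_of_lt hd0)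
  have hq₁ : q₁ ≠ 0 := by
    intro h
    rw [hR₁] at hx1
    simp [divC, h] at hx1
  have hz₁e : z₁ = p₁ / q₁ := by
    rw [hR₁, divC, if_neg hq₁] at hx1
    exact OnePoint.coe_eq_coe.mp hx1
  by_cases hq₂ : q₂ = 0
  · left; rw [hx2, divC, if_pos hq₂]
  right
  refine ⟨p₂ / q₂, ?_, by rw [hx2, divC, if_neg hq₂]⟩
  set z₂ := p₂ / q₂ with hz₂e
  have hdist : ‖z₁ - z₂‖ * (‖q₁‖ * ‖q₂‖) = 1 := by
    have h1 : (z₁ - z₂) * (q₁ * q₂) = p₁ * q₂ - p₂ * q₁ := by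
      rw [hz₁e, hz₂e]; field_simp
    calc ‖z₁ - z₂‖ * (‖q₁‖ * ‖q₂‖)
        = ‖(z₁ - z₂) * (q₁ * q₂)‖ := by rw [norm_mul, norm_mul]
      _ = 1 := by rw [h1, habs]
  by_cases h3 : d % 4 = 3
  · -- triangle case
    have hd3 : 3 ≤ d := by omega
    have hd3R : (3:ℝ) ≤ (d:ℝ) := by exact_mod_cast hd3
    have hs1 : 1 < Real.sqrt d := by nlinarith [hssq, hs0]
    have hW : Wpolygon d = convexHull ℝ {0, 1, omegaD d} := by rw [Wpolygon, if_pos h3]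
    have hωre : (omegaD d).re = 1/2 := by rw [omegaD_re, if_pos h3]
    have hωim : (omegaD d).im = Real.sqrt d / 2 := by rw [omegaD_im, if_pos h3]
    have ht : 0 < (omegaD d).im := by rw [hωim]; positivity
    have hωne : omegaD d ≠ 0 := by
      intro h; rw [h] at ht; simp at ht
    have hcne : (starRingEnd ℂ) (omegaD d) ≠ 0 := by
      rw [ne_eq, map_eq_zero]; exact hωne
    -- halfplane containments
    have hsub1 : Wpolygon d ⊆ {x : ℂ | ((-1 : ℂ) * x).im ≤ 0} := by
      rw [hW]
      refine convexHull_min ?_ (convex_halfplane _ _)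
      intro v hv
      simp only [Set.mem_insert_iff, Set.mem_singleton_iff] at hv
      rcases hv with rfl | rfl | rfl <;>
        simp [Set.mem_setOf_eq, Complex.mul_im] <;> linarith
    have hsub2 : Wpolygon d ⊆ {x : ℂ | ((starRingEnd ℂ) (omegaD d) * x).im ≤ 0} := by
      rw [hW]
      refine convexHull_min ?_ (convex_halfplane _ _)
      intro v hv
      simp only [Set.mem_insert_iff, Set.mem_singleton_iff] at hv
      rcases hv with rfl | rfl | rfl <;>
        simp [Set.mem_setOf_eq, Complex.mul_im, Complex.conj_re, Complex.conj_im] <;> linarith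
    have hsub3 : Wpolygon d ⊆ {x : ℂ | (omegaD d * x).im ≤ (omegaD d).im} := by
      rw [hW]
      refine convexHull_min ?_ (convex_halfplane _ _)
      intro v hv
      simp only [Set.mem_insert_iff, Set.mem_singleton_iff] at hv
      rcases hv with rfl | rfl | rfl <;>
        simp [Set.mem_setOf_eq, Complex.mul_im, hωre] <;> nlinarith [ht]
    by_cases hc1 : 0 ≤ z₂.im
    · by_cases hc2 : ((starRingEnd ℂ) (omegaD d) * z₂).im ≤ 0
      · by_cases hc3 : (omegaD d * z₂).im ≤ (omegaD d).im
        · -- all constraints: membership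
          rw [hW]
          have hkey : -((starRingEnd ℂ) (omegaD d) * z₂).im + z₂.im = (omegaD d * z₂).im := by
            rw [Complex.mul_im, Complex.mul_im, Complex.conj_re, Complex.conj_im, hωre]; ring
          refine mem_hull3 (a := 0) (b := 1) (c := omegaD d)
            (α := 1 - -((starRingEnd ℂ) (omegaD d) * z₂).im / (omegaD d).im
                  - z₂.im / (omegaD d).im)
            (β := -((starRingEnd ℂ) (omegaD d) * z₂).im / (omegaD d).im)
            (γ := z₂.im / (omegaD d).im) ?_ ?_ ?_ (by ring) ?_
          · have h8 : -((starRingEnd ℂ) (omegaD d) * z₂).im / (omegaD d).im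
                + z₂.im / (omegaD d).im ≤ 1 := by
              rw [← add_div, div_le_one ht, hkey]
              exact hc3
            linarith
          · exact div_nonneg (neg_nonneg.mpr hc2) ht.le
          · exact div_nonneg hc1 ht.le
          · apply Complex.ext
            · simp only [Complex.add_re, Complex.real_smul, Complex.mul_re,
                Complex.ofReal_re, Complex.ofReal_im, Complex.one_re, Complex.one_im,
                Complex.zero_re, Complex.zero_im, Complex.mul_im, Complex.conj_re,
                Complex.conj_im, hωre]
              field_simp
              ring
            · simp only [Complex.add_im, Complex.real_smul, Complex.mul_re,
                Complex.ofReal_re, Complex.ofReal_im, Complex.one_re, Complex.one_im,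
                Complex.zero_re, Complex.zero_im, Complex.mul_im, Complex.conj_re,
                Complex.conj_im, hωre]
              field_simp
              ring
        · -- violates hc3 : w = ω, c = ω.im
          exfalso
          push_neg at hc3
          refine key_contra ((omegaD d).im) ((omegaD d).im) (omegaD d) z₁ z₂ q₁ q₂ ht hq₁ hq₂
            hdist ?_ ?_ ?_ hc3 ?_
          · refine quant_im (ringInt_mul_mem ringInt_omega_mem (ringInt_sub_mem hq₁m hp₁))
              hq₁m hq₁ ?_
            have hveq : omegaD d * (q₁ - p₁) / q₁ = omegaD d - omegaD d * z₁ := by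
              rw [hz₁e]; field_simp
            rw [hveq]; simp
          · refine quant_im (ringInt_mul_mem ringInt_omega_mem (ringInt_sub_mem hp₂ hq₂m))
              hq₂m hq₂ ?_
            have hveq : omegaD d * (p₂ - q₂) / q₂ = omegaD d * z₂ - omegaD d := by
              rw [hz₂e]; field_simp
            rw [hveq]; simp
          · exact interior_lt hωne (fun x hx => hsub3 hx) hz₁
          · have h7 : ‖omegaD d‖ ^ 2 = 1/4 + Real.sqrt d ^ 2 / 4 := by
              rw [Complex.sq_norm, Complex.normSq_apply, hωre, hωim]; ring
            rw [hωim]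
            nlinarith [norm_nonneg (omegaD d), hssq]
      · -- violates hc2 : w = conj ω, c = 0
        exfalso
        push_neg at hc2
        refine key_contra ((omegaD d).im) 0 ((starRingEnd ℂ) (omegaD d)) z₁ z₂ q₁ q₂ ht hq₁ hq₂
          hdist ?_ ?_ ?_ hc2 ?_
        · refine quant_im (ringInt_neg_mem (ringInt_mul_mem (ringInt_conj_mem ringInt_omega_mem)
            hp₁)) hq₁m hq₁ ?_
          have hveq : -((starRingEnd ℂ) (omegaD d) * p₁) / q₁
              = -((starRingEnd ℂ) (omegaD d) * z₁) := by
            rw [hz₁e]; field_simp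
          rw [hveq]; simp
        · refine quant_im (ringInt_mul_mem (ringInt_conj_mem ringInt_omega_mem) hp₂) hq₂m hq₂ ?_
          have hveq : (starRingEnd ℂ) (omegaD d) * p₂ / q₂
              = (starRingEnd ℂ) (omegaD d) * z₂ := by
            rw [hz₂e]; field_simp
          rw [hveq]; simp
        · exact interior_lt hcne (fun x hx => hsub2 hx) hz₁
        · have h7 : ‖(starRingEnd ℂ) (omegaD d)‖ ^ 2
              = 1/4 + Real.sqrt d ^ 2 / 4 := by
            rw [Complex.norm_conj, Complex.sq_norm, Complex.normSq_apply, hωre, hωim]; ring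
          rw [hωim]
          nlinarith [norm_nonneg ((starRingEnd ℂ) (omegaD d)), hssq]
    · -- violates hc1 : w = -1, c = 0
      exfalso
      push_neg at hc1
      refine key_contra ((omegaD d).im) 0 (-1) z₁ z₂ q₁ q₂ ht hq₁ hq₂ hdist ?_ ?_ ?_ ?_ ?_
      · refine quant_im hp₁ hq₁m hq₁ ?_
        rw [← hz₁e]; simp
      · refine quant_im (ringInt_neg_mem hp₂) hq₂m hq₂ ?_
        have hveq : -p₂ / q₂ = -z₂ := by rw [hz₂e]; ring
        rw [hveq]; simp
      · exact interior_lt (by norm_num) (fun x hx => hsub1 hx) hz₁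
      · simp only [neg_mul, one_mul, Complex.neg_im]
        linarith
      · rw [hωim]
        simp only [norm_neg, norm_one]
        linarith
  · -- rectangle case
    have hd1R : (1:ℝ) ≤ (d:ℝ) := by exact_mod_cast hd1
    have hs1 : 1 ≤ Real.sqrt d := by nlinarith [hssq, hs0]
    have hW : Wpolygon d = convexHull ℝ {0, 1, omegaD d, omegaD d + 1} := by
      rw [Wpolygon, if_neg h3]
    have hωre : (omegaD d).re = 0 := by rw [omegaD_re, if_neg h3]
    have hωim : (omegaD d).im = Real.sqrt d := by rw [omegaD_im, if_neg h3]
    have ht : 0 < (omegaD d).im := by rw [hωim]; exact hs0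
    -- halfplane containments
    have hsub1 : Wpolygon d ⊆ {x : ℂ | ((-Complex.I) * x).im ≤ 0} := by
      rw [hW]
      refine convexHull_min ?_ (convex_halfplane _ _)
      intro v hv
      simp only [Set.mem_insert_iff, Set.mem_singleton_iff] at hv
      rcases hv with rfl | rfl | rfl | rfl <;>
        simp [Set.mem_setOf_eq, Complex.mul_im, hωre] <;> linarith
    have hsub2 : Wpolygon d ⊆ {x : ℂ | (Complex.I * x).im ≤ 1} := by
      rw [hW]
      refine convexHull_min ?_ (convex_halfplane _ _)
      intro v hv
      simp only [Set.mem_insert_iff, Set.mem_singleton_iff] at hv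
      rcases hv with rfl | rfl | rfl | rfl <;>
        simp [Set.mem_setOf_eq, Complex.mul_im, hωre] <;> linarith
    have hsub3 : Wpolygon d ⊆ {x : ℂ | ((-1 : ℂ) * x).im ≤ 0} := by
      rw [hW]
      refine convexHull_min ?_ (convex_halfplane _ _)
      intro v hv
      simp only [Set.mem_insert_iff, Set.mem_singleton_iff] at hv
      rcases hv with rfl | rfl | rfl | rfl <;>
        simp [Set.mem_setOf_eq, Complex.mul_im, hωim] <;> linarith
    have hsub4 : Wpolygon d ⊆ {x : ℂ | ((1 : ℂ) * x).im ≤ (omegaD d).im} := by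
      rw [hW]
      refine convexHull_min ?_ (convex_halfplane _ _)
      intro v hv
      simp only [Set.mem_insert_iff, Set.mem_singleton_iff] at hv
      rcases hv with rfl | rfl | rfl | rfl <;>
        simp [Set.mem_setOf_eq, Complex.mul_im, hωim] <;> linarith
    by_cases hc1 : 0 ≤ z₂.re
    · by_cases hc2 : z₂.re ≤ 1
      · by_cases hc3 : 0 ≤ z₂.im
        · by_cases hc4 : z₂.im ≤ Real.sqrt d
          · -- membership
            rw [hW]
            have h9 : z₂.im / Real.sqrt d ≤ 1 := by
              rw [div_le_one hs0]; exact hc4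
            have h10 : 0 ≤ z₂.im / Real.sqrt d := div_nonneg hc3 hs0.le
            refine mem_hull4 (a := 0) (b := 1) (c := omegaD d) (e := omegaD d + 1)
              (α := (1 - z₂.re) * (1 - z₂.im / Real.sqrt d))
              (β := z₂.re * (1 - z₂.im / Real.sqrt d))
              (γ := (1 - z₂.re) * (z₂.im / Real.sqrt d))
              (η := z₂.re * (z₂.im / Real.sqrt d))
              (by nlinarith) (by nlinarith) (by nlinarith) (by nlinarith) (by ring) ?_
            apply Complex.ext
            · simp only [Complex.add_re, Complex.real_smul, Complex.mul_re,
                Complex.ofReal_re, Complex.ofReal_im, Complex.one_re, Complex.one_im,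
                Complex.zero_re, Complex.zero_im, hωre, hωim]
              field_simp
              ring
            · simp only [Complex.add_im, Complex.real_smul, Complex.mul_im, Complex.mul_re,
                Complex.ofReal_re, Complex.ofReal_im, Complex.one_re, Complex.one_im,
                Complex.zero_re, Complex.zero_im, hωre, hωim]
              field_simp
              ring
          · -- violates hc4 : w = 1, c = s, δ = s
            exfalso
            push_neg at hc4
            refine key_contra ((omegaD d).im) ((omegaD d).im) 1 z₁ z₂ q₁ q₂ ht hq₁ hq₂
              hdist ?_ ?_ ?_ ?_ ?_
            · refine quant_im (ringInt_sub_mem (ringInt_mul_mem ringInt_omega_mem hq₁m) hp₁)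
                hq₁m hq₁ ?_
              have hveq : (omegaD d * q₁ - p₁) / q₁ = omegaD d - z₁ := by
                rw [hz₁e]; field_simp
              rw [hveq]; simp
            · refine quant_im (ringInt_sub_mem hp₂ (ringInt_mul_mem ringInt_omega_mem hq₂m))
                hq₂m hq₂ ?_
              have hveq : (p₂ - omegaD d * q₂) / q₂ = z₂ - omegaD d := by
                rw [hz₂e]; field_simp
              rw [hveq]; simp
            · exact interior_lt one_ne_zero (fun x hx => hsub4 hx) hz₁
            · simp only [one_mul]
              rw [hωim]; exact hc4
            · rw [hωim, norm_one]; linarith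
        · -- violates hc3 : w = -1, c = 0, δ = s
          exfalso
          push_neg at hc3
          refine key_contra ((omegaD d).im) 0 (-1) z₁ z₂ q₁ q₂ ht hq₁ hq₂ hdist ?_ ?_ ?_ ?_ ?_
          · refine quant_im hp₁ hq₁m hq₁ ?_
            rw [← hz₁e]; simp
          · refine quant_im (ringInt_neg_mem hp₂) hq₂m hq₂ ?_
            have hveq : -p₂ / q₂ = -z₂ := by rw [hz₂e]; ring
            rw [hveq]; simp
          · exact interior_lt (by norm_num) (fun x hx => hsub3 hx) hz₁
          · simp only [neg_mul, one_mul, Complex.neg_im]; linarith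
          · rw [hωim]; simp only [norm_neg, norm_one]; linarith
      · -- violates hc2 : w = I, c = 1, δ = 1
        exfalso
        push_neg at hc2
        refine key_contra 1 1 Complex.I z₁ z₂ q₁ q₂ one_pos hq₁ hq₂ hdist ?_ ?_ ?_ ?_ ?_
        · refine quant_re h3 (ringInt_sub_mem hq₁m hp₁) hq₁m hq₁ ?_
          have hveq : (q₁ - p₁) / q₁ = 1 - z₁ := by rw [hz₁e]; field_simp
          rw [hveq]; simp [Complex.mul_im]
        · refine quant_re h3 (ringInt_sub_mem hp₂ hq₂m) hq₂m hq₂ ?_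
          have hveq : (p₂ - q₂) / q₂ = z₂ - 1 := by rw [hz₂e]; field_simp
          rw [hveq]; simp [Complex.mul_im]
        · exact interior_lt Complex.I_ne_zero (fun x hx => hsub2 hx) hz₁
        · simp only [Complex.mul_im, Complex.I_re, Complex.I_im]; linarith
        · rw [Complex.norm_I]; norm_num
    · -- violates hc1 : w = -I, c = 0, δ = 1
      exfalso
      push_neg at hc1
      refine key_contra 1 0 (-Complex.I) z₁ z₂ q₁ q₂ one_pos hq₁ hq₂ hdist ?_ ?_ ?_ ?_ ?_
      · refine quant_re h3 hp₁ hq₁m hq₁ ?_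
        rw [← hz₁e]; simp [Complex.mul_im]
      · refine quant_re h3 (ringInt_neg_mem hp₂) hq₂m hq₂ ?_
        have hveq : -p₂ / q₂ = -z₂ := by rw [hz₂e]; ring
        rw [hveq]; simp [Complex.mul_im]
      · exact interior_lt (by simp [Complex.I_ne_zero]) (fun x hx => hsub1 hx) hz₁
      · simp only [Complex.mul_im, Complex.neg_re, Complex.neg_im, Complex.I_re, Complex.I_im]
        linarith
      · simp only [norm_neg, Complex.norm_I]; norm_num
end
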